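/- Under the hypotheses of the detectability setting — real n×n matrices F, S, H, K1, K̂, B, K with K̂ = K1 + F·H and S = I − H; κ, μ > 0 with ‖exp(s·F)‖ ≤ κ·e^{−μ·s} for all s ≥ 0; w continuous with ‖w(t)‖ ≤ w̄; ρ continuously differentiable with ‖ρ(t)‖ ≤ ρ̄; δ continuously differentiable; ε differentiable satisfying, for all t ≥ T_a, ε̇(t) = F·ε(t) + S·(w(t−T) + B·K·ρ(t−T)) − K1·(ρ(t−T) + δ(t)) − H·(ρ̇(t−T) + δ̇(t)); and ‖ε(T_a) + H·δ(T_a)‖ ≤ ē_{T_a} — define ē(t) = κ·e^{−μ(t−T_a)}·(ē_{T_a} + ‖H‖·ρ̄) + ‖H‖·ρ̄ + ∫_{T_a}^{t} κ·e^{−μ(t−τ)}·(‖S‖·w̄ + ‖S·B·K − K̂‖·ρ̄) dτ and r̄(t) = ē(t) + ρ̄. Then for every t ≥ T_a, the residual r(t) = ε(t) + ρ(t−T) + δ(t) satisfies the lower bound ‖r(t)‖ ≥ ‖S·δ(t) − ∫_{T_a}^{t} exp((t−τ)·F)·K̂·δ(τ) dτ‖ − r̄(t). -/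

import Mathlib

open NormedSpace intervalIntegral MeasureTheory
set_option maxHeartbeats 1000000
set_option synthInstance.maxHeartbeats 100000

variable {E : Type*} [NormedAddCommGroup E] [NormedSpace ℝ E] [CompleteSpace E]

lemma expF_mul (F : E →L[ℝ] E) (s u : ℝ) :
    exp (s • F) * exp (u • F) = exp ((s + u) • F) := by
  let +nondep : NormedAlgebra ℚ (E →L[ℝ] E) := .restrictScalars ℚ ℝ _
  rw [add_smul, exp_add_of_commute (((Commute.refl F).smul_left s).smul_right u)]

lemma var_const (F : E →L[ℝ] E) (g z : ℝ → E) (hg : Continuous g)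
    (a b : ℝ) (hab : a ≤ b)
    (hz : ∀ t ∈ Set.Icc a b, HasDerivAt z (F (z t) + g t) t) :
    z b = exp ((b - a) • F) (z a)
        + ∫ τ in a..b, exp ((b - τ) • F) (g τ) := by
  let +nondep : NormedAlgebra ℚ (E →L[ℝ] E) := .restrictScalars ℚ ℝ _
  have hce : Continuous fun t : ℝ => exp ((-t) • F) :=
    exp_continuous.comp (by continuity)
  have hyd : ∀ t ∈ Set.Icc a b,
      HasDerivAt (fun t : ℝ => exp ((-t) • F) (z t))
        (exp ((-t) • F) (g t)) t := by
    intro t ht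
    have hA : HasDerivAt (fun t : ℝ => exp ((-t) • F))
        ((-1 : ℝ) • (F * exp ((-t) • F))) t :=
      (hasDerivAt_exp_smul_const' F (-t)).scomp t (hasDerivAt_neg t)
    have h := hA.clm_apply (hz t ht)
    have hcomm : exp ((-t) • F) * F = F * exp ((-t) • F) :=
      ((Commute.refl F).smul_left (-t)).exp_left
    have h2 : (exp ((-t) • F)) (F (z t)) = F ((exp ((-t) • F)) (z t)) := by
      have := congrArg (fun M : E →L[ℝ] E => M (z t)) hcomm
      simpa [ContinuousLinearMap.mul_apply] using this
    have e1 : ((-1 : ℝ) • (F * exp ((-t) • F))) (z t)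
        = -(F ((exp ((-t) • F)) (z t))) := by
      rw [ContinuousLinearMap.smul_apply, ContinuousLinearMap.mul_apply, neg_one_smul]
    have e2 : (exp ((-t) • F)) (F (z t) + g t)
        = F ((exp ((-t) • F)) (z t)) + (exp ((-t) • F)) (g t) := by
      rw [map_add, h2]
    convert h using 1
    rw [e1, e2, neg_add_cancel_left]
  have hcont : Continuous fun τ : ℝ => exp ((-τ) • F) (g τ) :=
    hce.clm_apply hg
  have hftc := intervalIntegral.integral_eq_sub_of_hasDerivAt
    (f := fun t : ℝ => exp ((-t) • F) (z t))
    (f' := fun τ : ℝ => exp ((-τ) • F) (g τ))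
    (fun t ht => hyd t (by rwa [Set.uIcc_of_le hab] at ht))
    (hcont.intervalIntegrable a b)
  have happ := congrArg (fun v => exp (b • F) v) hftc
  rw [← (exp (b • F)).intervalIntegral_comp_comm (hcont.intervalIntegrable a b)] at happ
  have key : ∀ s : ℝ, ∀ v : E, exp (b • F) (exp ((-s) • F) v)
      = exp ((b - s) • F) v := by
    intro s v
    have := congrArg (fun M : E →L[ℝ] E => M v) (expF_mul F b (-s))
    simpa [ContinuousLinearMap.mul_apply, sub_eq_add_neg] using this
  rw [map_sub] at happ
  simp only [key] at happ
  have hbb : exp ((b - b) • F) (z b) = z b := by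
    simp [sub_self, exp_zero]
  rw [hbb] at happ
  rw [happ]
  abel



/-- **Lower bound on the residual under a watermarked replay attack
(Statement 5).**
Matrices are continuous linear maps on Euclidean space (so `‖·‖` is the
operator norm induced by the Euclidean norm), with matrix product `*` and
identity `1`. Under the detectability setting — `Khat = K1 + F·H`,
`S = I − H`, exponential decay of `exp(s F)`, bounded noises, the
watermarked error dynamics for `t ≥ T_a`, and
`‖ε(T_a) + H δ(T_a)‖ ≤ ebarTa` — the residual
`r(t) = ε(t) + ρ(t−T) + δ(t)` satisfies, for every `t ≥ T_a`,
`‖r(t)‖ ≥ ‖S δ(t) − ∫_{T_a}^t exp((t−τ) F) Khat δ(τ) dτ‖ − rbar(t)`. -/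
theorem residual_lower_bound {n : ℕ}
    (F S H K1 Khat B K : EuclideanSpace ℝ (Fin n) →L[ℝ] EuclideanSpace ℝ (Fin n))
    (hKhat : Khat = K1 + F * H) (hS : S = 1 - H)
    (κ μ : ℝ) (hκ : 0 < κ) (hμ : 0 < μ)
    (hFdecay : ∀ s : ℝ, 0 ≤ s → ‖NormedSpace.exp (s • F)‖ ≤ κ * Real.exp (-μ * s))
    (w ρ ρ' δ δ' : ℝ → EuclideanSpace ℝ (Fin n))
    (wbar ρbar : ℝ)
    (hw : Continuous w)
    (hρ : ∀ t : ℝ, HasDerivAt ρ (ρ' t) t) (hρ' : Continuous ρ')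
    (hδ : ∀ t : ℝ, HasDerivAt δ (δ' t) t) (hδ' : Continuous δ')
    (hwbound : ∀ t : ℝ, ‖w t‖ ≤ wbar)
    (hρbound : ∀ t : ℝ, ‖ρ t‖ ≤ ρbar)
    (T_a T : ℝ)
    (ε : ℝ → EuclideanSpace ℝ (Fin n))
    (hode : ∀ t : ℝ, T_a ≤ t →
      HasDerivAt ε
        (F (ε t) + S (w (t - T) + (B * K) (ρ (t - T)))
          - K1 (ρ (t - T) + δ t) - H (ρ' (t - T) + δ' t)) t)
    (ebarTa : ℝ) (hebarTa : 0 ≤ ebarTa)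
    (ebar rbar : ℝ → ℝ)
    (hebar : ∀ t : ℝ, ebar t =
      κ * Real.exp (-μ * (t - T_a)) * (ebarTa + ‖H‖ * ρbar) + ‖H‖ * ρbar
      + ∫ τ in T_a..t,
          κ * Real.exp (-μ * (t - τ)) * (‖S‖ * wbar + ‖S * B * K - Khat‖ * ρbar))
    (hrbar : ∀ t : ℝ, rbar t = ebar t + ρbar)
    (hinit : ‖ε T_a + H (δ T_a)‖ ≤ ebarTa) :
    ∀ t : ℝ, T_a ≤ t →
      ‖ε t + ρ (t - T) + δ t‖ ≥
        ‖S (δ t)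
          - ∫ τ in T_a..t, (NormedSpace.exp ((t - τ) • F)) (Khat (δ τ))‖
        - rbar t := by
  -- basic continuity facts
  have hρc : Continuous ρ := continuous_iff_continuousAt.mpr fun x => (hρ x).continuousAt
  have hδc : Continuous δ := continuous_iff_continuousAt.mpr fun x => (hδ x).continuousAt
  have hwbar0 : 0 ≤ wbar := (norm_nonneg (w 0)).trans (hwbound 0)
  have hρbar0 : 0 ≤ ρbar := (norm_nonneg (ρ 0)).trans (hρbound 0)
  -- shifted functions
  have hshift : Continuous fun s : ℝ => s - T := by continuity
  set z : ℝ → EuclideanSpace ℝ (Fin n) :=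
    fun s => ε s + H (ρ (s - T)) + H (δ s) with hzdef
  set g : ℝ → EuclideanSpace ℝ (Fin n) :=
    fun s => S (w (s - T)) + (S * B * K - Khat) (ρ (s - T)) - Khat (δ s) with hgdef
  set p : ℝ → EuclideanSpace ℝ (Fin n) :=
    fun s => S (w (s - T)) + (S * B * K - Khat) (ρ (s - T)) with hpdef
  have hgc : Continuous g := by
    apply Continuous.sub
    · exact (S.continuous.comp (hw.comp hshift)).add
        ((S * B * K - Khat).continuous.comp (hρc.comp hshift))
    · exact Khat.continuous.comp hδc
  have hpc : Continuous p :=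
    (S.continuous.comp (hw.comp hshift)).add
      ((S * B * K - Khat).continuous.comp (hρc.comp hshift))
  have hzode : ∀ s : ℝ, T_a ≤ s → HasDerivAt z (F (z s) + g s) s := by
    intro s hs
    have hρs : HasDerivAt (fun u : ℝ => ρ (u - T)) (ρ' (s - T)) s := by
      have := (hρ (s - T)).scomp s ((hasDerivAt_id s).sub_const T)
      simpa [Function.comp_def] using this
    have hHρ : HasDerivAt (fun u : ℝ => H (ρ (u - T))) (H (ρ' (s - T))) s :=
      H.hasFDerivAt.comp_hasDerivAt s hρs
    have hHδ : HasDerivAt (fun u : ℝ => H (δ u)) (H (δ' s)) s :=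
      H.hasFDerivAt.comp_hasDerivAt s (hδ s)
    have hsum := ((hode s hs).add hHρ).add hHδ
    have heq : F (ε s) + S (w (s - T) + (B * K) (ρ (s - T)))
          - K1 (ρ (s - T) + δ s) - H (ρ' (s - T) + δ' s)
          + H (ρ' (s - T)) + H (δ' s) = F (z s) + g s := by
      simp only [hzdef, hgdef, hKhat, map_add, ContinuousLinearMap.add_apply,
        ContinuousLinearMap.sub_apply, ContinuousLinearMap.mul_apply]
      abel
    rw [heq] at hsum
    exact hsum
  intro t ht
  -- variation of constants
  have hvar := var_const F g z hgc T_a t ht (fun s hs => hzode s hs.1)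
  -- split the integral
  let +nondep : NormedAlgebra ℚ (EuclideanSpace ℝ (Fin n) →L[ℝ] EuclideanSpace ℝ (Fin n)) :=
    .restrictScalars ℚ ℝ _
  have hceF : Continuous fun τ : ℝ => exp ((t - τ) • F) :=
    exp_continuous.comp (by continuity)
  have hintg : IntervalIntegrable (fun τ => exp ((t - τ) • F) (g τ)) volume T_a t :=
    (hceF.clm_apply hgc).intervalIntegrable T_a t
  have hintp : IntervalIntegrable (fun τ => exp ((t - τ) • F) (p τ)) volume T_a t :=
    (hceF.clm_apply hpc).intervalIntegrable T_a t
  have hintk : IntervalIntegrable (fun τ => exp ((t - τ) • F) (Khat (δ τ))) volume T_a t :=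
    (hceF.clm_apply (Khat.continuous.comp hδc)).intervalIntegrable T_a t
  have hsplit : (∫ τ in T_a..t, exp ((t - τ) • F) (g τ))
      = (∫ τ in T_a..t, exp ((t - τ) • F) (p τ))
        - ∫ τ in T_a..t, exp ((t - τ) • F) (Khat (δ τ)) := by
    rw [← intervalIntegral.integral_sub hintp hintk]
    apply intervalIntegral.integral_congr
    intro τ _
    simp only [hgdef, hpdef, map_sub]
  set I : EuclideanSpace ℝ (Fin n) :=
    ∫ τ in T_a..t, exp ((t - τ) • F) (Khat (δ τ)) with hIdef
  have hzI : z t + I = exp ((t - T_a) • F) (z T_a)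
      + ∫ τ in T_a..t, exp ((t - τ) • F) (p τ) := by
    rw [hvar, hsplit]; abel
  -- bound the initial term
  have hb1 : ‖exp ((t - T_a) • F) (z T_a)‖
      ≤ κ * Real.exp (-μ * (t - T_a)) * (ebarTa + ‖H‖ * ρbar) := by
    have h1 : ‖z T_a‖ ≤ ebarTa + ‖H‖ * ρbar := by
      have : z T_a = (ε T_a + H (δ T_a)) + H (ρ (T_a - T)) := by
        simp only [hzdef]; abel
      rw [this]
      refine (norm_add_le _ _).trans (add_le_add hinit ?_)
      exact (H.le_opNorm _).trans
        (mul_le_mul_of_nonneg_left (hρbound _) (norm_nonneg H))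
    calc ‖exp ((t - T_a) • F) (z T_a)‖
        ≤ ‖exp ((t - T_a) • F)‖ * ‖z T_a‖ := ContinuousLinearMap.le_opNorm _ _
      _ ≤ (κ * Real.exp (-μ * (t - T_a))) * (ebarTa + ‖H‖ * ρbar) := by
          apply mul_le_mul (hFdecay _ (by linarith)) h1 (norm_nonneg _) (by positivity)
  -- bound the forcing integral
  have hb2 : ‖∫ τ in T_a..t, exp ((t - τ) • F) (p τ)‖
      ≤ ∫ τ in T_a..t,
          κ * Real.exp (-μ * (t - τ)) * (‖S‖ * wbar + ‖S * B * K - Khat‖ * ρbar) := by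
    have habs := intervalIntegral.norm_integral_le_of_norm_le
      (f := fun τ => exp ((t - τ) • F) (p τ)) (μ := volume) (a := T_a) (b := t)
      (g := fun τ => κ * Real.exp (-μ * (t - τ)) * (‖S‖ * wbar + ‖S * B * K - Khat‖ * ρbar))
      ht ?_ ?_
    · exact habs
    · refine Filter.Eventually.of_forall ?_
      intro τ hτ
      have hτ0 : 0 ≤ t - τ := by linarith [hτ.2]
      have hp : ‖p τ‖ ≤ ‖S‖ * wbar + ‖S * B * K - Khat‖ * ρbar := by
        refine (norm_add_le _ _).trans (add_le_add ?_ ?_)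
        · exact (S.le_opNorm _).trans
            (mul_le_mul_of_nonneg_left (hwbound _) (norm_nonneg _))
        · exact ((S * B * K - Khat).le_opNorm _).trans
            (mul_le_mul_of_nonneg_left (hρbound _) (norm_nonneg _))
      calc ‖exp ((t - τ) • F) (p τ)‖
          ≤ ‖exp ((t - τ) • F)‖ * ‖p τ‖ := ContinuousLinearMap.le_opNorm _ _
        _ ≤ κ * Real.exp (-μ * (t - τ)) * (‖S‖ * wbar + ‖S * B * K - Khat‖ * ρbar) :=
            mul_le_mul (hFdecay _ hτ0) hp (norm_nonneg _) (by positivity)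
    · exact (Continuous.intervalIntegrable (by fun_prop) T_a t)
  -- bound Sρ
  have hSnorm : ‖S‖ ≤ 1 + ‖H‖ := by
    rw [hS]
    refine (norm_sub_le _ _).trans (add_le_add ?_ le_rfl)
    exact ContinuousLinearMap.norm_id_le
  have hb3 : ‖S (ρ (t - T))‖ ≤ ρbar + ‖H‖ * ρbar := by
    calc ‖S (ρ (t - T))‖ ≤ ‖S‖ * ρbar :=
          (S.le_opNorm _).trans (mul_le_mul_of_nonneg_left (hρbound _) (norm_nonneg _))
      _ ≤ (1 + ‖H‖) * ρbar := mul_le_mul_of_nonneg_right hSnorm hρbar0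
      _ = ρbar + ‖H‖ * ρbar := by ring
  -- decompose the residual
  have hdecomp : ε t + ρ (t - T) + δ t
      = (S (δ t) - I) + ((z t + I) + S (ρ (t - T))) := by
    simp only [hzdef, hS, ContinuousLinearMap.sub_apply, ContinuousLinearMap.one_apply]
    abel
  have hY : ‖(z t + I) + S (ρ (t - T))‖ ≤ rbar t := by
    have h1 : ‖z t + I‖ ≤ κ * Real.exp (-μ * (t - T_a)) * (ebarTa + ‖H‖ * ρbar)
        + ∫ τ in T_a..t,
            κ * Real.exp (-μ * (t - τ)) * (‖S‖ * wbar + ‖S * B * K - Khat‖ * ρbar) := by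
      rw [hzI]
      exact (norm_add_le _ _).trans (add_le_add hb1 hb2)
    have := (norm_add_le (z t + I) (S (ρ (t - T)))).trans (add_le_add h1 hb3)
    rw [hrbar, hebar]
    linarith
  rw [hdecomp]
  have htri := norm_add_le ((S (δ t) - I) + ((z t + I) + S (ρ (t - T))))
    (-((z t + I) + S (ρ (t - T))))
  simp only [add_neg_cancel_right, norm_neg] at htri
  have : ‖S (δ t) - I‖ ≤ ‖(S (δ t) - I) + ((z t + I) + S (ρ (t - T)))‖ + rbar t := by
    exact htri.trans (add_le_add le_rfl hY)
  linarith
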